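/- arXiv:2309.09154 — 4 statements merged into one kernel-verified Lean document; each statement's English description precedes it below -/
import Mathlib

section
/- Let f be a piecewise contracting interval map on X and suppose D ⊂ X̃. If A ⊂ X is a non-empty f-pseudo-invariant set, then A ∩ X̃ is a non-empty f-invariant set (i.e. A ∩ X̃ ≠ ∅ and f(A ∩ X̃) ⊂ A ∩ X̃). -/
open Set Filter Metric Topology

/-- A piecewise contracting interval map (PCIM) on the compact interval `X = [a,b]`:
there are `N ≥ 1` pairwise disjoint nonempty open (relative to `X`) subintervals
whose closures cover `X`, and `f` contracts with rate `lam ∈ (0,1)` on each piece. -/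
structure PCIM where
  a : ℝ
  b : ℝ
  hab : a < b
  N : ℕ
  hN : 1 ≤ N
  f : ℝ → ℝ
  lam : ℝ
  hlam₀ : 0 < lam
  hlam₁ : lam < 1
  piece : Fin N → Set ℝ
  piece_nonempty : ∀ i, (piece i).Nonempty
  piece_interval : ∀ i, ∃ c d : ℝ, piece i = Set.Ioo c d ∩ Set.Icc a b
  piece_disjoint : ∀ i j, i ≠ j → Disjoint (piece i) (piece j)
  cover : Set.Icc a b = ⋃ i, closure (piece i)
  mapsTo : Set.MapsTo f (Set.Icc a b) (Set.Icc a b)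
  contract : ∀ i, ∀ x ∈ piece i, ∀ y ∈ piece i, |f x - f y| ≤ lam * |x - y|

namespace PCIM

variable (P : PCIM)

/-- The underlying compact interval `X`. -/
def X : Set ℝ := Set.Icc P.a P.b

/-- `X* = ⋃ i, X_i`, the union of the contraction pieces. -/
def Xstar : Set ℝ := ⋃ i, P.piece i

/-- `Δ = X \ X*`, the set of boundaries of the contraction pieces. -/
def Delta : Set ℝ := P.X \ P.Xstar

/-- `X̃ = ⋂_{j ≥ 0} f⁻ʲ(X*)`, the points all of whose iterates are well defined. -/
def Xtilde : Set ℝ := ⋂ j : ℕ, (P.f^[j]) ⁻¹' P.Xstar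

/-- `D`: the set of one-sided limits of `f` at the points of `Δ`. -/
def D : Set ℝ :=
  {L | ∃ c ∈ P.Delta,
    ((𝓝[P.X ∩ Set.Iio c] c).NeBot ∧ Filter.Tendsto P.f (𝓝[P.X ∩ Set.Iio c] c) (𝓝 L)) ∨
    ((𝓝[P.X ∩ Set.Ioi c] c).NeBot ∧ Filter.Tendsto P.f (𝓝[P.X ∩ Set.Ioi c] c) (𝓝 L))}

/-- A set `A` is `f`-pseudo-invariant if for every `x ∈ A` at least one of the
one-sided limits of `f` at `x` belongs to `A`. -/
def PseudoInvariant (A : Set ℝ) : Prop :=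
  ∀ x ∈ A,
    (∃ L ∈ A, (𝓝[P.X ∩ Set.Iio x] x).NeBot ∧
      Filter.Tendsto P.f (𝓝[P.X ∩ Set.Iio x] x) (𝓝 L)) ∨
    (∃ L ∈ A, (𝓝[P.X ∩ Set.Ioi x] x).NeBot ∧
      Filter.Tendsto P.f (𝓝[P.X ∩ Set.Ioi x] x) (𝓝 L))

/-- `f` is piecewise monotonic: strictly monotone on each contraction piece. -/
def PiecewiseMonotonic : Prop :=
  ∀ i, StrictMonoOn P.f (P.piece i) ∨ StrictAntiOn P.f (P.piece i)

/-- `f` satisfies the separation property: it is piecewise monotonic and the closures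
of the images of distinct pieces are disjoint. -/
def SeparationProperty : Prop :=
  P.PiecewiseMonotonic ∧
    ∀ i j, i ≠ j → closure (P.f '' P.piece i) ∩ closure (P.f '' P.piece j) = ∅

/-- The iterates `Λ_n` defining the attractor: `Λ_0 = X`,
`Λ_{n+1} = cl (f (Λ_n \ Δ))`. -/
def LambdaIter : (P : PCIM) → ℕ → Set ℝ
  | Q, 0 => Q.X
  | Q, n + 1 => closure (Q.f '' (LambdaIter Q n \ Q.Delta))

/-- The attractor `Λ = ⋂_{n ≥ 1} Λ_n`. -/
def Lambda : Set ℝ := ⋂ n : ℕ, P.LambdaIter (n + 1)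

/-- The atom associated to the word `w = [i₁, …, iₙ]`:
`A_{i₁…iₙ} = F_{iₙ} ∘ ⋯ ∘ F_{i₁}(X)` where `F_i(A) = cl (f (A ∩ X_i))`. -/
def atomOf (w : List (Fin P.N)) : Set ℝ :=
  w.foldl (fun A i => closure (P.f '' (A ∩ P.piece i))) P.X

/-- `𝒜_n`: the set of (nonempty) atoms of generation `n`. -/
def atoms (n : ℕ) : Set (Set ℝ) :=
  {A | ∃ w : List (Fin P.N), w.length = n ∧ P.atomOf w = A ∧ A.Nonempty}

/-- `θ` is the itinerary of `x`: `f^t(x) ∈ X_{θ_t}` for all `t`. -/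
def IsItinerary (x : ℝ) (θ : ℕ → Fin P.N) : Prop :=
  ∀ t : ℕ, P.f^[t] x ∈ P.piece (θ t)

/-- The word `θ_t θ_{t+1} … θ_{t+n-1}` of length `n` of the sequence `θ`. -/
def word (θ : ℕ → Fin P.N) (t n : ℕ) : List (Fin P.N) :=
  (List.range n).map fun k => θ (t + k)

/-- `L_n(θ)`: the set of words of length `n` occurring in `θ`. -/
def lang (θ : ℕ → Fin P.N) (n : ℕ) : Set (List (Fin P.N)) :=
  {w | ∃ t : ℕ, w = P.word θ t n}

/-- The complexity function `p_θ(n) = #L_n(θ)`. -/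
noncomputable def complexity (θ : ℕ → Fin P.N) (n : ℕ) : ℕ := (P.lang θ n).ncard

/-- The forward orbit of `x` under `f`. -/
def orbit (x : ℝ) : Set ℝ := {y | ∃ k : ℕ, P.f^[k] x = y}

/-- The ω-limit set of `x` under `f`. -/
def omegaLimitSet (x : ℝ) : Set ℝ :=
  ⋂ n : ℕ, closure {y | ∃ m : ℕ, n ≤ m ∧ P.f^[m] x = y}

/-- A compact pseudo-invariant set `A` is `X̃`-minimal if the orbit of every point
of `A ∩ X̃` is dense in `A`. -/
def XtildeMinimal (A : Set ℝ) : Prop :=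
  IsCompact A ∧ P.PseudoInvariant A ∧ ∀ x ∈ A ∩ P.Xtilde, A ⊆ closure (P.orbit x)

/-- A periodic orbit contained in `X̃`. -/
def IsPeriodicOrbit (A : Set ℝ) : Prop :=
  ∃ x ∈ P.Xtilde, ∃ p : ℕ, 1 ≤ p ∧ P.f^[p] x = x ∧ A = P.orbit x

end PCIM

/-- A Cantor set: nonempty, compact, perfect and totally disconnected. -/
def IsCantorSet (A : Set ℝ) : Prop :=
  A.Nonempty ∧ IsCompact A ∧ Perfect A ∧ IsTotallyDisconnected A


lemma PCIM.f_mem_of_mem_Xstar (P : PCIM) {A : Set ℝ} (hA : P.PseudoInvariant A)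
    {x : ℝ} (hx : x ∈ A) (hxs : x ∈ P.Xstar) : P.f x ∈ A := by
  obtain ⟨i, hi⟩ := Set.mem_iUnion.mp hxs
  obtain ⟨c, d, hcd⟩ := P.piece_interval i
  have hLip : LipschitzOnWith (Real.toNNReal P.lam) P.f (P.piece i) := by
    apply LipschitzOnWith.of_dist_le_mul
    intro y hy z hz
    rw [Real.dist_eq, Real.dist_eq]
    calc |P.f y - P.f z| ≤ P.lam * |y - z| := P.contract i y hy z hz
      _ = Real.toNNReal P.lam * |y - z| := by
          rw [Real.coe_toNNReal _ P.hlam₀.le]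
  have hcont : Filter.Tendsto P.f (𝓝[P.piece i] x) (𝓝 (P.f x)) :=
    hLip.continuousOn x hi
  have hIoo : x ∈ Set.Ioo c d := by rw [hcd] at hi; exact hi.1
  have hkey : ∀ s : Set ℝ, 𝓝[P.X ∩ s] x ≤ 𝓝[P.piece i] x := by
    intro s
    rw [nhdsWithin_le_iff, hcd]
    refine Filter.inter_mem (nhdsWithin_le_nhds (Ioo_mem_nhds hIoo.1 hIoo.2)) ?_
    exact Filter.mem_of_superset self_mem_nhdsWithin Set.inter_subset_left
  rcases hA x hx with ⟨L, hLA, hne, ht⟩ | ⟨L, hLA, hne, ht⟩ <;>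
  · haveI := hne
    have hL : L = P.f x := tendsto_nhds_unique ht (hcont.mono_left (hkey _))
    rwa [hL] at hLA

lemma PCIM.f_mem_Xtilde (P : PCIM) {x : ℝ} (hx : x ∈ P.Xtilde) : P.f x ∈ P.Xtilde := by
  rw [PCIM.Xtilde, Set.mem_iInter] at hx ⊢
  intro j
  have := hx (j + 1)
  simpa [Function.iterate_succ_apply] using this

/-- If `D ⊆ X̃` and `A ⊆ X` is a nonempty `f`-pseudo-invariant set,
then `A ∩ X̃` is nonempty and `f`-invariant. -/
theorem pseudoInvariant_inter_Xtilde_nonempty_invariant (P : PCIM) (A : Set ℝ)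
    (hD : P.D ⊆ P.Xtilde) (hAX : A ⊆ P.X) (hAne : A.Nonempty)
    (hA : P.PseudoInvariant A) :
    (A ∩ P.Xtilde).Nonempty ∧ Set.MapsTo P.f (A ∩ P.Xtilde) (A ∩ P.Xtilde) := by
  constructor
  · obtain ⟨x, hx⟩ := hAne
    by_cases hxt : ∀ j, P.f^[j] x ∈ P.Xstar
    · exact ⟨x, hx, Set.mem_iInter.mpr fun j => hxt j⟩
    · push_neg at hxt
      have hAk : ∀ k : ℕ, (∀ m < k, P.f^[m] x ∈ P.Xstar) → P.f^[k] x ∈ A := by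
        intro k
        induction k with
        | zero => intro _; simpa using hx
        | succ n ih =>
          intro h
          rw [Function.iterate_succ_apply']
          exact P.f_mem_of_mem_Xstar hA
            (ih fun m hm => h m (hm.trans (Nat.lt_succ_self n)))
            (h n (Nat.lt_succ_self n))
      classical
      set j := Nat.find hxt with hj
      have hyA : P.f^[j] x ∈ A :=
        hAk j fun m hm => of_not_not (Nat.find_min hxt hm)
      have hyΔ : P.f^[j] x ∈ P.Delta := ⟨hAX hyA, Nat.find_spec hxt⟩
      rcases hA _ hyA with ⟨L, hLA, hne, ht⟩ | ⟨L, hLA, hne, ht⟩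
      · exact ⟨L, hLA, hD ⟨P.f^[j] x, hyΔ, Or.inl ⟨hne, ht⟩⟩⟩
      · exact ⟨L, hLA, hD ⟨P.f^[j] x, hyΔ, Or.inr ⟨hne, ht⟩⟩⟩
  · rintro x ⟨hxA, hxT⟩
    have hxs : x ∈ P.Xstar := by
      have := Set.mem_iInter.mp hxT 0
      simpa using this
    exact ⟨P.f_mem_of_mem_Xstar hA hxA hxs, P.f_mem_Xtilde hxT⟩
end

section
/- Let f be a piecewise contracting interval map on X. If f is piecewise monotonic, then the set X̃ = ∩_{j≥0} f^{-j}(X*) is dense in X. -/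
open Set Filter Metric Topology

section Aux

open Set

private lemma frontier_sub_aux (c d a b : ℝ) :
    frontier (Ioo c d ∩ Icc a b) ⊆ {c, d, a, b} := by
  refine (frontier_inter_subset _ _).trans ?_
  intro x hx
  simp only [mem_insert_iff, mem_singleton_iff]
  rcases hx with h | h
  · have h1 : x ∈ frontier (Ioo c d) := h.1
    by_cases hcd : c < d
    · rw [frontier_Ioo hcd] at h1
      simp only [mem_insert_iff, mem_singleton_iff] at h1; tauto
    · rw [Set.Ioo_eq_empty hcd] at h1; simp at h1
  · have h1 : x ∈ frontier (Icc a b) := h.2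
    rcases le_or_gt a b with hab | hab
    · rw [frontier_Icc hab] at h1
      simp only [mem_insert_iff, mem_singleton_iff] at h1; tauto
    · rw [Set.Icc_eq_empty hab.not_ge] at h1; simp at h1

private lemma delta_countable (P : PCIM) : P.Delta.Countable := by
  have hsub : P.Delta ⊆ ⋃ i, frontier (P.piece i) := by
    intro x hx
    have hxX : x ∈ Set.Icc P.a P.b := hx.1
    rw [P.cover] at hxX
    obtain ⟨i, hi⟩ := Set.mem_iUnion.1 hxX
    refine Set.mem_iUnion.2 ⟨i, hi, fun hint => hx.2 ?_⟩
    exact Set.mem_iUnion.2 ⟨i, interior_subset hint⟩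
  refine Set.Countable.mono hsub (Set.countable_iUnion fun i => ?_)
  obtain ⟨c, d, hcd⟩ := P.piece_interval i
  rw [hcd]
  exact Set.Countable.mono (frontier_sub_aux c d P.a P.b)
    (((((Set.finite_singleton P.b).insert P.a).insert d).insert c).countable)

private lemma preimage_countable (P : PCIM) (hmono : P.PiecewiseMonotonic)
    {S : Set ℝ} (hS : S.Countable) : (P.f ⁻¹' S ∩ P.X).Countable := by
  have hsub : P.f ⁻¹' S ∩ P.X ⊆ P.Delta ∪ ⋃ i, (P.f ⁻¹' S ∩ P.piece i) := by
    rintro x ⟨hxS, hxX⟩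
    by_cases hx : x ∈ P.Xstar
    · obtain ⟨i, hi⟩ := Set.mem_iUnion.1 hx
      exact Or.inr (Set.mem_iUnion.2 ⟨i, hxS, hi⟩)
    · exact Or.inl ⟨hxX, hx⟩
  refine Set.Countable.mono hsub ((delta_countable P).union
    (Set.countable_iUnion fun i => ?_))
  have hinj : Set.InjOn P.f (P.f ⁻¹' S ∩ P.piece i) := by
    rcases hmono i with h | h
    · exact h.injOn.mono Set.inter_subset_right
    · exact h.injOn.mono Set.inter_subset_right
  exact (show Set.MapsTo P.f (P.f ⁻¹' S ∩ P.piece i) S from fun x hx => hx.1).countable_of_injOn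
    hinj hS

private lemma iter_preimage_countable (P : PCIM) (hmono : P.PiecewiseMonotonic) :
    ∀ j : ℕ, ((P.f^[j]) ⁻¹' P.Delta ∩ P.X).Countable := by
  intro j
  induction j with
  | zero =>
      simpa using Set.Countable.mono Set.inter_subset_left (delta_countable P)
  | succ j ih =>
      have hsub : (P.f^[j + 1]) ⁻¹' P.Delta ∩ P.X ⊆
          P.f ⁻¹' ((P.f^[j]) ⁻¹' P.Delta ∩ P.X) ∩ P.X := by
        rintro x ⟨hx1, hx2⟩
        refine ⟨⟨?_, P.mapsTo hx2⟩, hx2⟩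
        rwa [Set.mem_preimage, ← Function.iterate_succ_apply]
      exact Set.Countable.mono hsub (preimage_countable P hmono ih)

end Aux

/-- If `f` is piecewise monotonic, then `X̃` is dense in `X`. -/
theorem Xtilde_dense_of_piecewiseMonotonic (P : PCIM)
    (hmono : P.PiecewiseMonotonic) :
    P.X ⊆ closure P.Xtilde := by
  set C : Set ℝ := ⋃ j : ℕ, ((P.f^[j]) ⁻¹' P.Delta ∩ P.X) with hC
  have hCc : C.Countable := Set.countable_iUnion (iter_preimage_countable P hmono)
  have hXt : P.X \ C ⊆ P.Xtilde := by
    rintro x ⟨hxX, hxC⟩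
    refine Set.mem_iInter.2 fun j => ?_
    have hxj : P.f^[j] x ∈ P.X := P.mapsTo.iterate j hxX
    by_contra hcon
    exact hxC (Set.mem_iUnion.2 ⟨j, ⟨hxj, hcon⟩, hxX⟩)
  have hdense : Dense Cᶜ := hCc.dense_compl ℝ
  have h1 : Set.Ioo P.a P.b ⊆ closure (Set.Ioo P.a P.b ∩ Cᶜ) :=
    hdense.open_subset_closure_inter isOpen_Ioo
  have h2 : Set.Ioo P.a P.b ∩ Cᶜ ⊆ P.Xtilde := fun x hx =>
    hXt ⟨Set.Ioo_subset_Icc_self hx.1, hx.2⟩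
  intro x hx
  have hx' : x ∈ closure (Set.Ioo P.a P.b) := by
    rwa [closure_Ioo P.hab.ne]
  have hchain : closure (Set.Ioo P.a P.b) ⊆ closure P.Xtilde := by
    calc closure (Set.Ioo P.a P.b)
        ⊆ closure (closure (Set.Ioo P.a P.b ∩ Cᶜ)) := closure_mono h1
      _ = closure (Set.Ioo P.a P.b ∩ Cᶜ) := closure_closure
      _ ⊆ closure P.Xtilde := closure_mono h2
  exact hchain hx'
end

section
/- Let f be a piecewise contracting interval map on X satisfying the separation property and D ⊂ X̃. Then the Hausdorff dimension of the attractor Λ of f is equal to zero. -/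
open Set Filter Metric Topology

open scoped ENNReal NNReal
namespace PCIM

variable (P : PCIM)

/-- One refinement step on atoms. -/
def step (A : Set ℝ) (i : Fin P.N) : Set ℝ := closure (P.f '' (A ∩ P.piece i))

lemma atomOf_nil : P.atomOf [] = P.X := rfl

lemma atomOf_concat (w : List (Fin P.N)) (i : Fin P.N) :
    P.atomOf (w ++ [i]) = P.step (P.atomOf w) i := by
  simp [atomOf, step, List.foldl_append]

lemma piece_subset_X (i : Fin P.N) : P.piece i ⊆ P.X := by
  obtain ⟨c, d, h⟩ := P.piece_interval i
  rw [h]; exact inter_subset_right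

lemma isClosed_X : IsClosed P.X := isClosed_Icc

lemma X_nonempty : P.X.Nonempty := nonempty_Icc.2 P.hab.le

lemma piece_ordConnected (i : Fin P.N) : (P.piece i).OrdConnected := by
  obtain ⟨c, d, h⟩ := P.piece_interval i
  rw [h]; exact Set.ordConnected_Ioo.inter Set.ordConnected_Icc

lemma bddAbove_piece (i : Fin P.N) : BddAbove (P.piece i) :=
  (bddAbove_Icc (a := P.a) (b := P.b)).mono (P.piece_subset_X i)

lemma bddBelow_piece (i : Fin P.N) : BddBelow (P.piece i) :=
  (bddBelow_Icc (a := P.b) (b := P.a)).mono (P.piece_subset_X i)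

lemma sSup_piece_notMem {i k : Fin P.N} (hik : k ≠ i) : sSup (P.piece i) ∉ P.piece k := by
  intro hq
  obtain ⟨c, d, hk⟩ := P.piece_interval k
  have hq' : sSup (P.piece i) ∈ Ioo c d ∩ Icc P.a P.b := hk ▸ hq
  obtain ⟨z, hz, hcz⟩ := exists_lt_of_lt_csSup (P.piece_nonempty i) hq'.1.1
  have hzq : z ≤ sSup (P.piece i) := le_csSup (P.bddAbove_piece i) hz
  have hzk : z ∈ P.piece k := by
    rw [hk]; exact ⟨⟨hcz, lt_of_le_of_lt hzq hq'.1.2⟩, P.piece_subset_X i hz⟩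
  exact Set.disjoint_left.mp (P.piece_disjoint k i hik) hzk hz

lemma sSup_piece_injective : Function.Injective (fun i : Fin P.N => sSup (P.piece i)) := by
  intro i k h
  simp only at h
  by_contra hik
  by_cases hq : sSup (P.piece i) ∈ P.piece i
  · exact P.sSup_piece_notMem hik (h ▸ hq)
  · obtain ⟨c, d, hk⟩ := P.piece_interval k
    have hcq : c < sSup (P.piece k) := by
      obtain ⟨z, hz⟩ := P.piece_nonempty k
      exact lt_of_lt_of_le (hk ▸ hz : z ∈ Ioo c d ∩ Icc P.a P.b).1.1
        (le_csSup (P.bddAbove_piece k) hz)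
    have hqd : sSup (P.piece k) ≤ d :=
      csSup_le (P.piece_nonempty k) fun z hz => (hk ▸ hz : z ∈ Ioo c d ∩ Icc P.a P.b).1.2.le
    obtain ⟨z, hz, hcz⟩ := exists_lt_of_lt_csSup (P.piece_nonempty i) (h ▸ hcq)
    have hzq : z ≤ sSup (P.piece i) := le_csSup (P.bddAbove_piece i) hz
    have hzne : z ≠ sSup (P.piece i) := fun he => hq (he ▸ hz)
    have hzd : z < d := lt_of_lt_of_le (lt_of_le_of_ne hzq hzne |>.trans_le (h ▸ le_rfl)) hqd
    have hzk : z ∈ P.piece k := by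
      rw [hk]; exact ⟨⟨hcz, hzd⟩, P.piece_subset_X i hz⟩
    exact Set.disjoint_left.mp (P.piece_disjoint k i (Ne.symm hik)) hzk hz

lemma sSup_mem_of_two_pieces {B : Set ℝ} (hB : B.OrdConnected) {i j : Fin P.N} (hij : i ≠ j)
    {x y : ℝ} (hxB : x ∈ B) (hxi : x ∈ P.piece i) (hyB : y ∈ B) (hyj : y ∈ P.piece j)
    (hxy : x < y) : sSup (P.piece i) ∈ B := by
  have h1 : x ≤ sSup (P.piece i) := le_csSup (P.bddAbove_piece i) hxi
  have h2 : sSup (P.piece i) ≤ y := by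
    by_contra h
    push_neg at h
    obtain ⟨z, hz, hyz⟩ := exists_lt_of_lt_csSup (P.piece_nonempty i) h
    have : y ∈ P.piece i := (P.piece_ordConnected i).out hxi hz ⟨hxy.le, hyz.le⟩
    exact Set.disjoint_left.mp (P.piece_disjoint i j hij) this hyj
  exact hB.out hxB hyB ⟨h1, h2⟩

lemma lipschitzOnWith (i : Fin P.N) : LipschitzOnWith P.lam.toNNReal P.f (P.piece i) := by
  rw [lipschitzOnWith_iff_dist_le_mul]
  intro x hx y hy
  rw [Real.coe_toNNReal _ P.hlam₀.le, Real.dist_eq, Real.dist_eq]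
  exact P.contract i x hx y hy

end PCIM
/-- A continuous map agreeing with a strictly monotone map on a set all of whose
"closure-gaps" lie in the set is strictly monotone on the closure. -/
lemma strictMonoOn_closure_aux {s : Set ℝ} {f g : ℝ → ℝ} (hg : Continuous g)
    (heq : Set.EqOn f g s) (hf : StrictMonoOn f s)
    (hio : ∀ y₁ ∈ closure s, ∀ y₂ ∈ closure s, y₁ < y₂ → Set.Ioo y₁ y₂ ⊆ s) :
    StrictMonoOn g (closure s) := by
  intro y₁ h₁ y₂ h₂ h12
  set m₁ := y₁ + (y₂ - y₁) / 3 with hm₁def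
  set m₂ := y₁ + 2 * (y₂ - y₁) / 3 with hm₂def
  have hm₁ : m₁ ∈ Set.Ioo y₁ y₂ := ⟨by rw [hm₁def]; linarith, by rw [hm₁def]; linarith⟩
  have hm₂ : m₂ ∈ Set.Ioo y₁ y₂ := ⟨by rw [hm₂def]; linarith, by rw [hm₂def]; linarith⟩
  have hm12 : m₁ < m₂ := by rw [hm₁def, hm₂def]; linarith
  have hm₁s : m₁ ∈ s := hio y₁ h₁ y₂ h₂ h12 hm₁
  have hm₂s : m₂ ∈ s := hio y₁ h₁ y₂ h₂ h12 hm₂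
  have k1 : g y₁ ≤ f m₁ := by
    refine le_of_tendsto ((hg.tendsto y₁).mono_left
      (nhdsWithin_le_nhds : 𝓝[Set.Ioi y₁] y₁ ≤ 𝓝 y₁)) ?_
    filter_upwards [Ioo_mem_nhdsGT hm₁.1] with t ht
    have hts : t ∈ s := hio y₁ h₁ y₂ h₂ h12 ⟨ht.1, ht.2.trans hm₁.2⟩
    rw [← heq hts]
    exact (hf hts hm₁s ht.2).le
  have k2 : f m₂ ≤ g y₂ := by
    refine ge_of_tendsto ((hg.tendsto y₂).mono_left
      (nhdsWithin_le_nhds : 𝓝[Set.Iio y₂] y₂ ≤ 𝓝 y₂)) ?_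
    filter_upwards [Ioo_mem_nhdsLT hm₂.2] with t ht
    have hts : t ∈ s := hio y₁ h₁ y₂ h₂ h12 ⟨hm₂.1.trans ht.1, ht.2⟩
    rw [← heq hts]
    exact (hf hm₂s hts ht.1).le
  exact lt_of_le_of_lt k1 (lt_of_lt_of_le (hf hm₁s hm₂s hm12) k2)

namespace PCIM

variable (P : PCIM)

lemma closure_piece_subset (i : Fin P.N) :
    closure (P.piece i) ⊆ Set.Icc (sInf (P.piece i)) (sSup (P.piece i)) :=
  closure_minimal
    (fun z hz => ⟨csInf_le (P.bddBelow_piece i) hz, le_csSup (P.bddAbove_piece i) hz⟩)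
    isClosed_Icc

lemma gaps_subset_piece (i : Fin P.N) :
    ∀ y₁ ∈ closure (P.piece i), ∀ y₂ ∈ closure (P.piece i), y₁ < y₂ →
      Set.Ioo y₁ y₂ ⊆ P.piece i := by
  intro y₁ h₁ y₂ h₂ _ t ht
  have hb₁ := P.closure_piece_subset i h₁
  have hb₂ := P.closure_piece_subset i h₂
  have hts : sInf (P.piece i) < t := lt_of_le_of_lt hb₁.1 ht.1
  have htt : t < sSup (P.piece i) := lt_of_lt_of_le ht.2 hb₂.2
  obtain ⟨u, hu, hut⟩ := exists_lt_of_csInf_lt (P.piece_nonempty i) hts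
  obtain ⟨v, hv, htv⟩ := exists_lt_of_lt_csSup (P.piece_nonempty i) htt
  exact (P.piece_ordConnected i).out hu hv ⟨hut.le, htv.le⟩

/-- A continuous injective-on-the-closure extension of `f` from a piece. -/
lemma exists_ext (hsep : P.SeparationProperty) (i : Fin P.N) :
    ∃ g : ℝ → ℝ, Continuous g ∧ Set.EqOn P.f g (P.piece i) ∧
      Set.InjOn g (closure (P.piece i)) := by
  obtain ⟨g, glip, hg⟩ := (P.lipschitzOnWith i).extend_real
  refine ⟨g, glip.continuous, hg, ?_⟩
  rcases hsep.1 i with hmono | hanti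
  · exact (strictMonoOn_closure_aux glip.continuous hg hmono (P.gaps_subset_piece i)).injOn
  · have hneg : StrictMonoOn (fun x => -(P.f x)) (P.piece i) := fun x hx y hy hxy =>
      neg_lt_neg (hanti hx hy hxy)
    have heqneg : Set.EqOn (fun x => -(P.f x)) (fun x => -(g x)) (P.piece i) :=
      fun x hx => by simp [hg hx]
    have := (strictMonoOn_closure_aux (glip.continuous.neg) heqneg hneg
      (P.gaps_subset_piece i)).injOn
    intro x hx y hy hxy
    exact this hx hy (by simp [hxy])

lemma atom_isClosed (w : List (Fin P.N)) : IsClosed (P.atomOf w) := by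
  induction w using List.reverseRecOn with
  | nil => exact P.isClosed_X
  | append_singleton v i _ => rw [P.atomOf_concat]; exact isClosed_closure

lemma atom_subset_X (w : List (Fin P.N)) : P.atomOf w ⊆ P.X := by
  induction w using List.reverseRecOn with
  | nil => exact subset_rfl
  | append_singleton v i _ =>
    rw [P.atomOf_concat]
    refine closure_minimal ?_ P.isClosed_X
    rintro y ⟨x, hx, rfl⟩
    exact P.mapsTo (P.piece_subset_X i hx.2)

lemma atom_ordConnected (w : List (Fin P.N)) : (P.atomOf w).OrdConnected := by
  induction w using List.reverseRecOn with
  | nil => exact Set.ordConnected_Icc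
  | append_singleton v i ih =>
    rw [P.atomOf_concat]
    have h1 : (P.atomOf v ∩ P.piece i).OrdConnected := ih.inter (P.piece_ordConnected i)
    have h2 : IsPreconnected (P.f '' (P.atomOf v ∩ P.piece i)) :=
      h1.isPreconnected.image _ (((P.lipschitzOnWith i).continuousOn).mono inter_subset_right)
    exact h2.closure.ordConnected

lemma ediam_image_le' {K : NNReal} {f : ℝ → ℝ} {s : Set ℝ} (h : LipschitzOnWith K f s) :
    EMetric.diam (f '' s) ≤ (K : ENNReal) * EMetric.diam s := by
  apply EMetric.diam_le
  rintro x ⟨u, hu, rfl⟩ y ⟨v, hv, rfl⟩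
  exact (h hu hv).trans (mul_le_mul_right (EMetric.edist_le_diam_of_mem hu hv) _)

lemma diam_atom_le (w : List (Fin P.N)) :
    EMetric.diam (P.atomOf w) ≤ ENNReal.ofReal (P.lam ^ w.length * (P.b - P.a)) := by
  induction w using List.reverseRecOn with
  | nil =>
    show EMetric.diam (Icc P.a P.b) ≤ ENNReal.ofReal (P.lam ^ 0 * (P.b - P.a))
    rw [pow_zero, one_mul]; exact (Real.ediam_Icc P.a P.b).le
  | append_singleton v i ih =>
    rw [P.atomOf_concat, step]
    have hlen : (v ++ [i]).length = v.length + 1 := by simp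
    rw [hlen]
    have hcoe : (↑P.lam.toNNReal : ℝ≥0∞) = ENNReal.ofReal P.lam := rfl
    calc EMetric.diam (closure (P.f '' (P.atomOf v ∩ P.piece i)))
        = EMetric.diam (P.f '' (P.atomOf v ∩ P.piece i)) := EMetric.diam_closure _
      _ ≤ ↑P.lam.toNNReal * EMetric.diam (P.atomOf v ∩ P.piece i) :=
          ediam_image_le' ((P.lipschitzOnWith i).mono inter_subset_right)
      _ ≤ ↑P.lam.toNNReal * EMetric.diam (P.atomOf v) :=
          mul_le_mul_right (EMetric.diam_mono inter_subset_left) _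
      _ ≤ ↑P.lam.toNNReal * ENNReal.ofReal (P.lam ^ v.length * (P.b - P.a)) :=
          mul_le_mul_right ih _
      _ = ENNReal.ofReal (P.lam ^ (v.length + 1) * (P.b - P.a)) := by
          rw [hcoe, ← ENNReal.ofReal_mul P.hlam₀.le]
          ring_nf

lemma step_eq_image {i : Fin P.N} {g : ℝ → ℝ} (hg : Continuous g)
    (heq : Set.EqOn P.f g (P.piece i)) (A : Set ℝ) :
    P.step A i = g '' closure (A ∩ P.piece i) := by
  have himg : P.f '' (A ∩ P.piece i) = g '' (A ∩ P.piece i) :=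
    Set.image_congr fun x hx => heq hx.2
  rw [step, himg]
  refine Subset.antisymm (closure_minimal (image_mono subset_closure) ?_) ?_
  · exact (((isCompact_Icc (a := P.a) (b := P.b)).closure_of_subset
      ((inter_subset_right).trans (P.piece_subset_X i))).image hg).isClosed
  · exact (image_closure_subset_closure_image hg).trans le_rfl

end PCIM
namespace PCIM

variable (P : PCIM)

lemma step_subset_closure_image (A : Set ℝ) (i : Fin P.N) :
    P.step A i ⊆ closure (P.f '' P.piece i) :=
  closure_mono (image_mono inter_subset_right)

/-- Distinct atoms of the same generation are disjoint. -/
lemma atom_disjoint (hsep : P.SeparationProperty) :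
    ∀ n : ℕ, ∀ w₁ w₂ : List (Fin P.N), w₁.length = n → w₂.length = n →
      P.atomOf w₁ ≠ P.atomOf w₂ → Disjoint (P.atomOf w₁) (P.atomOf w₂) := by
  intro n
  induction n with
  | zero =>
    intro w₁ w₂ h₁ h₂ hne
    rw [List.length_eq_zero_iff] at h₁ h₂
    exact absurd (by rw [h₁, h₂]) hne
  | succ n ih =>
    intro w₁ w₂ h₁ h₂ hne
    obtain ⟨v₁, i₁, rfl⟩ : ∃ v i, w₁ = v ++ [i] := by
      rcases w₁.eq_nil_or_concat with rfl | ⟨v, i, rfl⟩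
      · simp at h₁
      · exact ⟨v, i, by simp⟩
    obtain ⟨v₂, i₂, rfl⟩ : ∃ v i, w₂ = v ++ [i] := by
      rcases w₂.eq_nil_or_concat with rfl | ⟨v, i, rfl⟩
      · simp at h₂
      · exact ⟨v, i, by simp⟩
    have hl₁ : v₁.length = n := by simpa using h₁
    have hl₂ : v₂.length = n := by simpa using h₂
    by_contra hdis
    rw [Set.not_disjoint_iff] at hdis
    obtain ⟨x, hx₁, hx₂⟩ := hdis
    rw [P.atomOf_concat, P.atomOf_concat] at hne
    rw [P.atomOf_concat] at hx₁ hx₂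
    have hii : i₁ = i₂ := by
      by_contra hii
      have hxm : x ∈ closure (P.f '' P.piece i₁) ∩ closure (P.f '' P.piece i₂) :=
        ⟨P.step_subset_closure_image _ i₁ hx₁, P.step_subset_closure_image _ i₂ hx₂⟩
      rw [hsep.2 i₁ i₂ hii] at hxm
      exact hxm
    subst hii
    obtain ⟨g, hgc, hge, hgi⟩ := P.exists_ext hsep i₁
    rw [P.step_eq_image hgc hge] at hx₁ hx₂
    obtain ⟨y₁, hy₁, hgy₁⟩ := hx₁
    obtain ⟨y₂, hy₂, hgy₂⟩ := hx₂
    have hy : y₁ = y₂ :=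
      hgi (closure_mono inter_subset_right hy₁) (closure_mono inter_subset_right hy₂)
        (hgy₁.trans hgy₂.symm)
    have hb₁ : y₁ ∈ P.atomOf v₁ :=
      (P.atom_isClosed v₁).closure_subset (closure_mono inter_subset_left hy₁)
    have hb₂ : y₂ ∈ P.atomOf v₂ :=
      (P.atom_isClosed v₂).closure_subset (closure_mono inter_subset_left hy₂)
    by_cases hbb : P.atomOf v₁ = P.atomOf v₂
    · exact hne (by rw [hbb])
    · exact Set.disjoint_left.mp (ih v₁ v₂ hl₁ hl₂ hbb) hb₁ (hy ▸ hb₂)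

lemma atoms_disjoint (hsep : P.SeparationProperty) {n : ℕ} {A₁ A₂ : Set ℝ}
    (h₁ : A₁ ∈ P.atoms n) (h₂ : A₂ ∈ P.atoms n) (hne : A₁ ≠ A₂) : Disjoint A₁ A₂ := by
  obtain ⟨w₁, hl₁, rfl, -⟩ := h₁
  obtain ⟨w₂, hl₂, rfl, -⟩ := h₂
  exact P.atom_disjoint hsep n w₁ w₂ hl₁ hl₂ hne

lemma atoms_ordConnected {n : ℕ} {A : Set ℝ} (hA : A ∈ P.atoms n) : A.OrdConnected := by
  obtain ⟨w, -, rfl, -⟩ := hA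
  exact P.atom_ordConnected w

lemma atoms_finite (n : ℕ) : (P.atoms n).Finite := by
  have : P.atoms n ⊆ P.atomOf '' {w : List (Fin P.N) | w.length = n} := by
    rintro A ⟨w, hl, rfl, -⟩
    exact ⟨w, hl, rfl⟩
  exact ((List.finite_length_eq (Fin P.N) n).image _).subset this

/-- Every atom of generation `n+1` has a parent atom of generation `n`. -/
lemma exists_parent {n : ℕ} {A : Set ℝ} (hA : A ∈ P.atoms (n + 1)) :
    ∃ B ∈ P.atoms n, ∃ i : Fin P.N, (B ∩ P.piece i).Nonempty ∧ A = P.step B i := by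
  obtain ⟨w, hl, rfl, hne⟩ := hA
  obtain ⟨v, i, rfl⟩ : ∃ v i, w = v ++ [i] := by
    rcases w.eq_nil_or_concat with rfl | ⟨v, i, rfl⟩
    · simp at hl
    · exact ⟨v, i, by simp⟩
  rw [P.atomOf_concat] at hne ⊢
  have hne' : (P.atomOf v ∩ P.piece i).Nonempty := by
    rcases closure_nonempty_iff.mp hne with ⟨y, x, hx, rfl⟩
    exact ⟨x, hx⟩
  exact ⟨P.atomOf v, ⟨v, by simpa using hl, rfl, hne'.mono inter_subset_left⟩, i, hne', rfl⟩

/-- The parent decomposition of a nonempty atom is unique. -/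
lemma parent_unique (hsep : P.SeparationProperty) {n : ℕ} {B₁ B₂ : Set ℝ}
    (h₁ : B₁ ∈ P.atoms n) (h₂ : B₂ ∈ P.atoms n) {i₁ i₂ : Fin P.N}
    (hne : (P.step B₁ i₁).Nonempty) (heq : P.step B₁ i₁ = P.step B₂ i₂) :
    B₁ = B₂ ∧ i₁ = i₂ := by
  obtain ⟨x, hx₁⟩ := hne
  have hx₂ : x ∈ P.step B₂ i₂ := heq ▸ hx₁
  have hii : i₁ = i₂ := by
    by_contra hii
    have hxm : x ∈ closure (P.f '' P.piece i₁) ∩ closure (P.f '' P.piece i₂) :=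
      ⟨P.step_subset_closure_image _ i₁ hx₁, P.step_subset_closure_image _ i₂ hx₂⟩
    rw [hsep.2 i₁ i₂ hii] at hxm
    exact hxm
  subst hii
  refine ⟨?_, rfl⟩
  obtain ⟨g, hgc, hge, hgi⟩ := P.exists_ext hsep i₁
  rw [P.step_eq_image hgc hge] at hx₁ hx₂
  obtain ⟨y₁, hy₁, hgy₁⟩ := hx₁
  obtain ⟨y₂, hy₂, hgy₂⟩ := hx₂
  have hy : y₁ = y₂ :=
    hgi (closure_mono inter_subset_right hy₁) (closure_mono inter_subset_right hy₂)
      (hgy₁.trans hgy₂.symm)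
  obtain ⟨w₁, hl₁, rfl, -⟩ := h₁
  obtain ⟨w₂, hl₂, rfl, -⟩ := h₂
  have hb₁ : y₁ ∈ P.atomOf w₁ :=
    (P.atom_isClosed w₁).closure_subset (closure_mono inter_subset_left hy₁)
  have hb₂ : y₂ ∈ P.atomOf w₂ :=
    (P.atom_isClosed w₂).closure_subset (closure_mono inter_subset_left hy₂)
  by_contra hbb
  exact Set.disjoint_left.mp (P.atom_disjoint hsep n w₁ w₂ hl₁ hl₂ hbb) hb₁ (hy ▸ hb₂)

end PCIM
namespace PCIM

variable (P : PCIM)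

lemma atoms_zero : P.atoms 0 = {P.X} := by
  ext A
  constructor
  · rintro ⟨w, hl, rfl, -⟩
    rw [List.length_eq_zero_iff] at hl
    subst hl
    rfl
  · rintro rfl
    exact ⟨[], rfl, rfl, P.X_nonempty⟩

lemma ncard_atoms_succ_le (hsep : P.SeparationProperty) (n : ℕ) :
    (P.atoms (n + 1)).ncard ≤ (P.atoms n).ncard + P.N := by
  classical
  haveI : Nonempty (Fin P.N) := ⟨⟨0, P.hN⟩⟩
  have key : ∀ A ∈ P.atoms (n + 1),
      ∃ B ∈ P.atoms n, ∃ i : Fin P.N, (B ∩ P.piece i).Nonempty ∧ A = P.step B i :=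
    fun A hA => P.exists_parent hA
  choose! Bf hBf If hIf hSf using key
  set cond : Set ℝ → Prop := fun A =>
    ∃ x ∈ Bf A ∩ P.piece (If A), ∃ j, j ≠ If A ∧ ∃ y ∈ Bf A ∩ P.piece j, x < y with hcond
  set φ : Set ℝ → Set ℝ ⊕ ℝ := fun A =>
    if cond A then Sum.inr (sSup (P.piece (If A))) else Sum.inl (Bf A) with hφ
  have hmaps : ∀ A ∈ P.atoms (n + 1),
      φ A ∈ (Sum.inl '' P.atoms n ∪ Sum.inr '' (Set.range fun i : Fin P.N => sSup (P.piece i))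
        : Set (Set ℝ ⊕ ℝ)) := by
    intro A hA
    simp only [hφ]
    split_ifs with h
    · exact Or.inr ⟨_, ⟨If A, rfl⟩, rfl⟩
    · exact Or.inl ⟨_, hBf A hA, rfl⟩
  have hinj : Set.InjOn φ (P.atoms (n + 1)) := by
    intro A₁ hA₁ A₂ hA₂ heq
    simp only [hφ] at heq
    by_cases h₁ : cond A₁ <;> by_cases h₂ : cond A₂
    · -- both inr
      rw [if_pos h₁, if_pos h₂] at heq
      have hsup : sSup (P.piece (If A₁)) = sSup (P.piece (If A₂)) := by
        simpa using heq
      have hi : If A₁ = If A₂ := P.sSup_piece_injective hsup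
      obtain ⟨x₁, hx₁, j₁, hj₁, y₁, hy₁, hxy₁⟩ := h₁
      obtain ⟨x₂, hx₂, j₂, hj₂, y₂, hy₂, hxy₂⟩ := h₂
      have hδ₁ : sSup (P.piece (If A₁)) ∈ Bf A₁ :=
        P.sSup_mem_of_two_pieces (P.atoms_ordConnected (hBf A₁ hA₁)) (Ne.symm hj₁)
          hx₁.1 hx₁.2 hy₁.1 hy₁.2 hxy₁
      have hδ₂ : sSup (P.piece (If A₂)) ∈ Bf A₂ :=
        P.sSup_mem_of_two_pieces (P.atoms_ordConnected (hBf A₂ hA₂)) (Ne.symm hj₂)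
          hx₂.1 hx₂.2 hy₂.1 hy₂.2 hxy₂
      have hBB : Bf A₁ = Bf A₂ := by
        by_contra hbb
        exact Set.disjoint_left.mp (P.atoms_disjoint hsep (hBf A₁ hA₁) (hBf A₂ hA₂) hbb)
          hδ₁ (by rw [hsup]; exact hδ₂)
      rw [hSf A₁ hA₁, hSf A₂ hA₂, hBB, hi]
    · rw [if_pos h₁, if_neg h₂] at heq
      exact absurd heq (by simp)
    · rw [if_neg h₁, if_pos h₂] at heq
      exact absurd heq (by simp)
    · -- both inl
      rw [if_neg h₁, if_neg h₂] at heq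
      have hBB : Bf A₁ = Bf A₂ := by simpa using heq
      have hi : If A₁ = If A₂ := by
        by_contra hii
        simp only [hcond] at h₁ h₂
        push_neg at h₁ h₂
        obtain ⟨x₁, hx₁⟩ := hIf A₁ hA₁
        obtain ⟨x₂, hx₂⟩ := hIf A₂ hA₂
        have h21 : x₂ ≤ x₁ := h₁ x₁ hx₁ (If A₂) (Ne.symm hii) x₂ (hBB ▸ hx₂)
        have h12 : x₁ ≤ x₂ := h₂ x₂ hx₂ (If A₁) hii x₁ (hBB ▸ hx₁)
        have hxx : x₁ = x₂ := le_antisymm h12 h21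
        exact Set.disjoint_left.mp (P.piece_disjoint _ _ hii) (hxx ▸ hx₁.2) hx₂.2
      rw [hSf A₁ hA₁, hSf A₂ hA₂, hBB, hi]
  have htfin : ((Sum.inl '' P.atoms n ∪ Sum.inr ''
      (Set.range fun i : Fin P.N => sSup (P.piece i))) : Set (Set ℝ ⊕ ℝ)).Finite :=
    ((P.atoms_finite n).image _).union ((Set.finite_range _).image _)
  calc (P.atoms (n + 1)).ncard
      ≤ ((Sum.inl '' P.atoms n ∪ Sum.inr ''
          (Set.range fun i : Fin P.N => sSup (P.piece i))) : Set (Set ℝ ⊕ ℝ)).ncard :=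
        Set.ncard_le_ncard_of_injOn φ hmaps hinj htfin
    _ ≤ (Sum.inl '' P.atoms n : Set (Set ℝ ⊕ ℝ)).ncard +
          (Sum.inr '' (Set.range fun i : Fin P.N => sSup (P.piece i)) : Set (Set ℝ ⊕ ℝ)).ncard :=
        Set.ncard_union_le _ _
    _ ≤ (P.atoms n).ncard + P.N := by
        gcongr
        · rw [Set.ncard_image_of_injective _ Sum.inl_injective]
        · calc (Sum.inr '' (Set.range fun i : Fin P.N => sSup (P.piece i))
              : Set (Set ℝ ⊕ ℝ)).ncard
              = (Set.range fun i : Fin P.N => sSup (P.piece i)).ncard :=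
                Set.ncard_image_of_injective _ Sum.inr_injective
            _ = ((fun i : Fin P.N => sSup (P.piece i)) '' Set.univ).ncard := by
                rw [Set.image_univ]
            _ ≤ (Set.univ : Set (Fin P.N)).ncard := Set.ncard_image_le Set.finite_univ
            _ = P.N := by simp [Set.ncard_univ]
  
lemma ncard_atoms_le (hsep : P.SeparationProperty) (n : ℕ) :
    (P.atoms n).ncard ≤ 1 + n * P.N := by
  induction n with
  | zero => simp [P.atoms_zero]
  | succ n ih =>
    calc (P.atoms (n + 1)).ncard ≤ (P.atoms n).ncard + P.N := P.ncard_atoms_succ_le hsep n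
      _ ≤ 1 + n * P.N + P.N := by omega
      _ = 1 + (n + 1) * P.N := by ring

end PCIM
namespace PCIM

variable (P : PCIM)

lemma LambdaIter_zero : P.LambdaIter 0 = P.X := rfl

lemma LambdaIter_succ (n : ℕ) :
    P.LambdaIter (n + 1) = closure (P.f '' (P.LambdaIter n \ P.Delta)) := rfl

lemma LambdaIter_subset_X (n : ℕ) : P.LambdaIter n ⊆ P.X := by
  induction n with
  | zero => exact subset_rfl
  | succ n ih =>
    rw [P.LambdaIter_succ]
    refine closure_minimal ?_ P.isClosed_X
    rintro y ⟨x, hx, rfl⟩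
    exact P.mapsTo (ih hx.1)

lemma LambdaIter_subset_atoms (n : ℕ) :
    P.LambdaIter n ⊆ ⋃ w ∈ {w : List (Fin P.N) | w.length = n}, P.atomOf w := by
  induction n with
  | zero =>
    intro x hx
    exact Set.mem_biUnion (show ([] : List (Fin P.N)) ∈ _ from rfl) hx
  | succ n ih =>
    rw [P.LambdaIter_succ]
    refine closure_minimal ?_ ?_
    · rintro y ⟨x, ⟨hxl, hxd⟩, rfl⟩
      have hxX : x ∈ P.X := P.LambdaIter_subset_X n hxl
      have hxs : x ∈ P.Xstar := by
        by_contra h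
        exact hxd ⟨hxX, h⟩
      obtain ⟨i, hi⟩ := Set.mem_iUnion.mp hxs
      obtain ⟨w, hw, hxw⟩ := Set.mem_iUnion₂.mp (ih hxl)
      refine Set.mem_biUnion (show w ++ [i] ∈ {w : List (Fin P.N) | w.length = n + 1} by
        simp only [Set.mem_setOf_eq] at hw ⊢; simp [hw]) ?_
      rw [P.atomOf_concat]
      exact subset_closure ⟨x, ⟨hxw, hi⟩, rfl⟩
    · exact Set.Finite.isClosed_biUnion (List.finite_length_eq (Fin P.N) (n + 1))
        fun w _ => P.atom_isClosed w

lemma Lambda_subset_atoms (n : ℕ) : P.Lambda ⊆ ⋃ A ∈ P.atoms (n + 1), A := by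
  intro x hx
  have h1 : x ∈ P.LambdaIter (n + 1) := Set.mem_iInter.mp hx n
  obtain ⟨w, hw, hxw⟩ := Set.mem_iUnion₂.mp (P.LambdaIter_subset_atoms (n + 1) h1)
  exact Set.mem_biUnion ⟨w, hw, rfl, ⟨x, hxw⟩⟩ hxw

end PCIM
open MeasureTheory in
/-- Under the separation property and `D ⊆ X̃`, the Hausdorff
dimension of the attractor `Λ` is zero. -/
theorem dimH_attractor_eq_zero (P : PCIM)
    (hsep : P.SeparationProperty) (hD : P.D ⊆ P.Xtilde) :
    dimH P.Lambda = 0 := by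
  classical
  have hC0 : (0 : ℝ) ≤ P.b - P.a := by linarith [P.hab.le]
  have key : ∀ d : ℝ, 0 < d → μH[d] P.Lambda = 0 := by
    intro d hd
    haveI : ∀ n : ℕ, Fintype ↥(P.atoms (n + 1)) := fun n => (P.atoms_finite (n + 1)).fintype
    set r : ℕ → ENNReal := fun n => ENNReal.ofReal (P.lam ^ (n + 1) * (P.b - P.a)) with hrdef
    have hr0 : Tendsto r atTop (𝓝 0) := by
      have h1 : Tendsto (fun n : ℕ => P.lam ^ (n + 1) * (P.b - P.a)) atTop (𝓝 0) := by
        have h2 := (tendsto_pow_atTop_nhds_zero_of_lt_one P.hlam₀.le P.hlam₁).mul_const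
          (P.b - P.a)
        rw [zero_mul] at h2
        exact h2.comp (tendsto_add_atTop_nat 1)
      have h3 := ENNReal.tendsto_ofReal h1
      simpa [hrdef] using h3
    have hdiam : ∀ (n : ℕ) (A : ↥(P.atoms (n + 1))), EMetric.diam (A : Set ℝ) ≤ r n := by
      intro n A
      obtain ⟨w, hw, hA, -⟩ := A.2
      rw [← hA, hrdef]
      simpa [hw] using P.diam_atom_le w
    have hcover : ∀ n : ℕ, P.Lambda ⊆ ⋃ A : ↥(P.atoms (n + 1)), (A : Set ℝ) := by
      intro n
      rw [Set.iUnion_coe_set]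
      exact P.Lambda_subset_atoms n
    have hle := MeasureTheory.Measure.hausdorffMeasure_le_liminf_sum d P.Lambda r hr0
      (fun n (A : ↥(P.atoms (n + 1))) => (A : Set ℝ))
      (Eventually.of_forall hdiam) (Eventually.of_forall hcover)
    have hsum : ∀ n : ℕ, (∑ A : ↥(P.atoms (n + 1)), EMetric.diam (A : Set ℝ) ^ d)
        ≤ ((1 + (n + 1) * P.N : ℕ) : ENNReal) * r n ^ d := by
      intro n
      calc ∑ A : ↥(P.atoms (n + 1)), EMetric.diam (A : Set ℝ) ^ d
          ≤ ∑ _A : ↥(P.atoms (n + 1)), r n ^ d :=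
            Finset.sum_le_sum fun A _ => ENNReal.rpow_le_rpow (hdiam n A) hd.le
        _ = (Fintype.card ↥(P.atoms (n + 1)) : ENNReal) * r n ^ d := by
            rw [Finset.sum_const, Finset.card_univ, nsmul_eq_mul]
        _ ≤ ((1 + (n + 1) * P.N : ℕ) : ENNReal) * r n ^ d := by
            refine mul_le_mul_left (Nat.cast_le.mpr ?_) _
            rw [← Nat.card_eq_fintype_card, Nat.card_coe_set_eq]
            exact P.ncard_atoms_le hsep (n + 1)
    have hpow : ∀ n : ℕ, (P.lam ^ (n + 1) : ℝ) ^ d = (P.lam ^ d) ^ (n + 1) := by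
      intro n
      rw [← Real.rpow_natCast P.lam (n + 1), ← Real.rpow_mul P.hlam₀.le, mul_comm,
        Real.rpow_mul P.hlam₀.le, Real.rpow_natCast]
    set ρ : ℝ := P.lam ^ d with hρdef
    have hρ0 : 0 ≤ ρ := Real.rpow_nonneg P.hlam₀.le d
    have hρ1 : ρ < 1 := Real.rpow_lt_one P.hlam₀.le P.hlam₁ hd
    have hlim : Tendsto (fun n : ℕ => ((1 + (n + 1) * P.N : ℕ) : ENNReal) * r n ^ d)
        atTop (𝓝 0) := by
      have heq : ∀ n : ℕ, ((1 + (n + 1) * P.N : ℕ) : ENNReal) * r n ^ d =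
          ENNReal.ofReal (((1 + (n + 1) * P.N : ℕ) : ℝ) * (ρ ^ (n + 1) * (P.b - P.a) ^ d)) := by
        intro n
        rw [hrdef]
        have hx : (0 : ℝ) ≤ P.lam ^ (n + 1) * (P.b - P.a) :=
          mul_nonneg (pow_nonneg P.hlam₀.le _) hC0
        rw [ENNReal.ofReal_rpow_of_nonneg hx hd.le, Real.mul_rpow (pow_nonneg P.hlam₀.le _) hC0,
          hpow n, ← ENNReal.ofReal_natCast, ← ENNReal.ofReal_mul (by positivity)]
      have hreal : Tendsto (fun n : ℕ => ((1 + (n + 1) * P.N : ℕ) : ℝ) *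
          (ρ ^ (n + 1) * (P.b - P.a) ^ d)) atTop (𝓝 0) := by
        have t1 : Tendsto (fun m : ℕ => ρ ^ m) atTop (𝓝 0) :=
          tendsto_pow_atTop_nhds_zero_of_lt_one hρ0 hρ1
        have t2 : Tendsto (fun m : ℕ => (m : ℝ) * ρ ^ m) atTop (𝓝 0) :=
          tendsto_self_mul_const_pow_of_abs_lt_one (by rwa [abs_of_nonneg hρ0])
        have t3 : Tendsto (fun n : ℕ => (ρ ^ (n + 1) +
            (P.N : ℝ) * (((n + 1 : ℕ) : ℝ) * ρ ^ (n + 1))) * (P.b - P.a) ^ d) atTop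
            (𝓝 ((0 + (P.N : ℝ) * 0) * (P.b - P.a) ^ d)) := by
          exact (((t1.comp (tendsto_add_atTop_nat 1)).add
            (((t2.comp (tendsto_add_atTop_nat 1))).const_mul (P.N : ℝ))).mul_const _)
        rw [show ((0 : ℝ) + (P.N : ℝ) * 0) * (P.b - P.a) ^ d = 0 by ring] at t3
        refine t3.congr fun n => ?_
        push_cast
        ring
      have := ENNReal.tendsto_ofReal hreal
      rw [ENNReal.ofReal_zero] at this
      refine Tendsto.congr (fun n => (heq n).symm) this
    have hliminf : μH[d] P.Lambda ≤ 0 := by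
      refine hle.trans ?_
      have h4 : liminf (fun n : ℕ => ∑ A : ↥(P.atoms (n + 1)), EMetric.diam (A : Set ℝ) ^ d)
          atTop ≤ liminf (fun n : ℕ => ((1 + (n + 1) * P.N : ℕ) : ENNReal) * r n ^ d) atTop :=
        liminf_le_liminf (Eventually.of_forall hsum)
      rw [hlim.liminf_eq] at h4
      exact h4
    exact le_antisymm hliminf zero_le
  refine le_antisymm (dimH_le fun d' hd' => ?_) zero_le
  rcases eq_or_lt_of_le (show (0 : ℝ≥0) ≤ d' from zero_le) with h0 | h0
  · simp [← h0]
  · exact absurd hd' (by rw [key (d' : ℝ) (by exact_mod_cast h0)]; simp)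
end

section
/- Let f be a piecewise contracting interval map on X satisfying the separation property, with N contraction pieces. Let x ∈ X̃ and let θ be its itinerary. Then there exist m₀ ≥ 1, α ∈ {0,…,N−1} and β ∈ {1,…,1+m₀(N−1−α)} such that the complexity function satisfies p_θ(n) = αn + β for all n ≥ m₀. -/
open Set Filter Metric Topology

namespace PCIMAux

open Set Filter Topology List

variable (P : PCIM)

/-- pieces are contained in the interval -/
lemma piece_subset (i : Fin P.N) : P.piece i ⊆ Set.Icc P.a P.b := by
  obtain ⟨c, d, h⟩ := P.piece_interval i
  rw [h]; exact inter_subset_right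

lemma piece_ordConn (i : Fin P.N) : OrdConnected (P.piece i) := by
  obtain ⟨c, d, h⟩ := P.piece_interval i
  rw [h]; exact Set.ordConnected_Ioo.inter Set.ordConnected_Icc

lemma piece_pair (i : Fin P.N) : ∃ p q, p ∈ P.piece i ∧ q ∈ P.piece i ∧ p < q := by
  obtain ⟨c, d, h⟩ := P.piece_interval i
  obtain ⟨z, hz⟩ := P.piece_nonempty i
  rw [h] at hz
  obtain ⟨⟨hzc, hzd⟩, hza, hzb⟩ := hz
  have hab := P.hab
  set lo := max c P.a with hlo
  set hi := min d P.b with hhi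
  have h1 : lo < hi := by
    simp only [hlo, hhi, lt_min_iff, max_lt_iff]
    constructor <;> constructor <;> linarith
  refine ⟨(2*lo + hi)/3, (lo + 2*hi)/3, ?_, ?_, by linarith⟩
  · rw [h]
    constructor
    · constructor <;>
      · simp only [hlo, hhi] at *
        have := le_max_left c P.a; have := min_le_left d P.b; linarith
    · constructor <;>
      · simp only [hlo, hhi] at *
        have := le_max_right c P.a; have := min_le_right d P.b; linarith
  · rw [h]
    constructor
    · constructor <;>
      · simp only [hlo, hhi] at *
        have := le_max_left c P.a; have := min_le_left d P.b; linarith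
    · constructor <;>
      · simp only [hlo, hhi] at *
        have := le_max_right c P.a; have := min_le_right d P.b; linarith

/-- `Left i j` : the piece `i` lies entirely to the left of the piece `j`. -/
def Left (i j : Fin P.N) : Prop := ∀ p ∈ P.piece i, ∀ q ∈ P.piece j, p < q

lemma left_or_left {i j : Fin P.N} (hij : i ≠ j) : Left P i j ∨ Left P j i := by
  obtain ⟨p₀, hp₀⟩ := P.piece_nonempty i
  obtain ⟨q₀, hq₀⟩ := P.piece_nonempty j
  have hd := P.piece_disjoint i j hij
  have key : ∀ (i j : Fin P.N), Disjoint (P.piece i) (P.piece j) →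
      ∀ p₀ ∈ P.piece i, ∀ q₀ ∈ P.piece j, p₀ < q₀ → Left P i j := by
    intro i j hd p₀ hp₀ q₀ hq₀ hlt p hp q hq
    by_contra hqp
    push_neg at hqp
    have hne : q ≠ p := fun h => Set.disjoint_left.mp hd hp (h ▸ hq)
    have hqp' : q < p := lt_of_le_of_ne hqp hne
    rcases le_or_gt p₀ q with h1 | h1
    · exact Set.disjoint_left.mp hd ((piece_ordConn P i).out hp₀ hp ⟨h1, hqp⟩) hq
    · exact Set.disjoint_left.mp hd hp₀ ((piece_ordConn P j).out hq hq₀ ⟨h1.le, hlt.le⟩)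
  rcases lt_trichotomy p₀ q₀ with h | h | h
  · exact Or.inl (key i j hd p₀ hp₀ q₀ hq₀ h)
  · exact absurd (h ▸ hp₀) (fun hh => Set.disjoint_left.mp hd hh hq₀)
  · exact Or.inr (key j i hd.symm q₀ hq₀ p₀ hp₀ h)

/-- the supremum of a piece -/
noncomputable def rs (i : Fin P.N) : ℝ := sSup (P.piece i)

lemma piece_bddAbove (i : Fin P.N) : BddAbove (P.piece i) :=
  BddAbove.mono (piece_subset P i) bddAbove_Icc

lemma le_rs {i : Fin P.N} {p : ℝ} (hp : p ∈ P.piece i) : p ≤ rs P i :=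
  le_csSup (piece_bddAbove P i) hp

lemma rs_le {i j : Fin P.N} (h : Left P i j) {q : ℝ} (hq : q ∈ P.piece j) : rs P i ≤ q :=
  csSup_le (P.piece_nonempty i) (fun p hp => (h p hp q hq).le)

lemma rs_lt {i j : Fin P.N} (h : Left P i j) : rs P i < rs P j := by
  obtain ⟨p, q, hp, hq, hlt⟩ := piece_pair P j
  calc rs P i ≤ p := rs_le P h hp
    _ < q := hlt
    _ ≤ rs P j := le_rs P hq

lemma rs_inj {i j : Fin P.N} (h : rs P i = rs P j) : i = j := by
  by_contra hij
  rcases left_or_left P hij with hl | hl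
  · exact absurd h (rs_lt P hl).ne
  · exact absurd h.symm (rs_lt P hl).ne

lemma left_of_rs_lt {i j : Fin P.N} (h : rs P i < rs P j) : Left P i j := by
  have hij : i ≠ j := fun hh => absurd (hh ▸ h) (lt_irrefl _)
  rcases left_or_left P hij with hl | hl
  · exact hl
  · exact absurd (rs_lt P hl) (asymm h)

lemma rs_mem_Delta {i j : Fin P.N} (hij : i ≠ j) {p q : ℝ}
    (hp : p ∈ P.piece i) (hq : q ∈ P.piece j) (hL : Left P i j) :
    rs P i ∈ P.Delta := by
  have hpX := piece_subset P i hp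
  have hqX := piece_subset P j hq
  have h1 : p ≤ rs P i := le_rs P hp
  have h2 : rs P i ≤ q := rs_le P hL hq
  constructor
  · exact ⟨le_trans hpX.1 h1, le_trans h2 hqX.2⟩
  · intro hmem
    rw [PCIM.Xstar, Set.mem_iUnion] at hmem
    obtain ⟨k, hk⟩ := hmem
    by_cases hki : k = i
    · subst hki
      -- rs P k ∈ piece k, find a point of piece k above the sup
      have hrq : rs P k ≠ q := fun h => Set.disjoint_left.mp (P.piece_disjoint k j hij) (h ▸ hk) hq
      have hrq' : rs P k < q := lt_of_le_of_ne h2 hrq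
      obtain ⟨c, d, hcd⟩ := P.piece_interval k
      rw [hcd] at hk
      obtain ⟨⟨hc, hd⟩, ha, hb⟩ := hk
      set y := (rs P k + min d q)/2 with hy
      have hry : rs P k < y := by
        have : rs P k < min d q := lt_min hd hrq'
        simp only [hy]; linarith
      have hymem : y ∈ P.piece k := by
        rw [hcd]
        have h3 : y < min d q := by
          have : rs P k < min d q := lt_min hd hrq'
          simp only [hy]; linarith
        have := min_le_left d q
        have := min_le_right d q
        exact ⟨⟨by linarith, by linarith⟩, by linarith, by linarith [hqX.2]⟩
      exact absurd (le_rs P hymem) (not_le.mpr hry)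
    · -- k ≠ i : a point of piece i close to its sup lies in piece k
      have hpr : p ≠ rs P i := fun h =>
        Set.disjoint_left.mp (P.piece_disjoint i k (fun hh => hki hh.symm)) hp (h ▸ hk)
      have hpr' : p < rs P i := lt_of_le_of_ne h1 hpr
      obtain ⟨c, d, hcd⟩ := P.piece_interval k
      rw [hcd] at hk
      obtain ⟨⟨hc, hd⟩, ha, hb⟩ := hk
      have hz : max c p < rs P i := max_lt hc hpr'
      obtain ⟨y, hy, hzy⟩ := exists_lt_of_lt_csSup (P.piece_nonempty i) hz
      have hyr : y ≤ rs P i := le_rs P hy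
      have hyX := piece_subset P i hy
      have : y ∈ P.piece k := by
        rw [hcd]
        exact ⟨⟨lt_of_le_of_lt (le_max_left c p) hzy, lt_of_le_of_lt hyr hd⟩, hyX.1, hyX.2⟩
      exact Set.disjoint_left.mp (P.piece_disjoint i k (fun hh => hki hh.symm)) hy this

lemma f_contOn (i : Fin P.N) : ContinuousOn P.f (P.piece i) := by
  have : LipschitzOnWith ⟨P.lam, P.hlam₀.le⟩ P.f (P.piece i) := by
    apply LipschitzOnWith.of_dist_le_mul
    intro x hx y hy
    rw [Real.dist_eq, Real.dist_eq]
    exact P.contract i x hx y hy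
  exact this.continuousOn

/-! ### Atoms -/

/-- one step in the construction of atoms -/
def pstep (A : Set ℝ) (i : Fin P.N) : Set ℝ := closure (P.f '' (A ∩ P.piece i))

lemma atomOf_eq (w : List (Fin P.N)) : P.atomOf w = w.foldl (pstep P) P.X := rfl

lemma pstep_mono {A B : Set ℝ} (h : A ⊆ B) (i : Fin P.N) : pstep P A i ⊆ pstep P B i :=
  closure_mono (Set.image_mono (Set.inter_subset_inter_left _ h))

lemma foldl_pstep_mono {A B : Set ℝ} (h : A ⊆ B) (w : List (Fin P.N)) :
    w.foldl (pstep P) A ⊆ w.foldl (pstep P) B := by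
  induction w generalizing A B with
  | nil => exact h
  | cons i w ih => exact ih (pstep_mono P h i)

lemma pstep_subset_X {A : Set ℝ} (_h : A ⊆ P.X) (i : Fin P.N) : pstep P A i ⊆ P.X := by
  apply closure_minimal _ isClosed_Icc
  intro y ⟨z, hz, hfz⟩
  exact hfz ▸ P.mapsTo (piece_subset P i hz.2)

lemma foldl_pstep_subset_X {A : Set ℝ} (h : A ⊆ P.X) (w : List (Fin P.N)) :
    w.foldl (pstep P) A ⊆ P.X := by
  induction w generalizing A with
  | nil => exact h
  | cons i w ih => exact ih (pstep_subset_X P h i)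

lemma atom_subset_X (w : List (Fin P.N)) : P.atomOf w ⊆ P.X :=
  atomOf_eq P w ▸ foldl_pstep_subset_X P subset_rfl w

lemma atomOf_concat (w : List (Fin P.N)) (i : Fin P.N) :
    P.atomOf (w ++ [i]) = pstep P (P.atomOf w) i := by
  rw [atomOf_eq, atomOf_eq, List.foldl_append]
  rfl

lemma atom_closed {w : List (Fin P.N)} (h : w ≠ []) : IsClosed (P.atomOf w) := by
  rcases List.eq_nil_or_concat w with h' | ⟨u, i, rfl⟩
  · exact absurd h' h
  · rw [List.concat_eq_append, atomOf_concat]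
    exact isClosed_closure

lemma foldl_pstep_ordConn {A : Set ℝ} (h : OrdConnected A) (w : List (Fin P.N)) :
    OrdConnected (w.foldl (pstep P) A) := by
  induction w generalizing A with
  | nil => exact h
  | cons i w ih =>
    apply ih
    have h1 : OrdConnected (A ∩ P.piece i) := h.inter (piece_ordConn P i)
    have h2 : IsPreconnected (P.f '' (A ∩ P.piece i)) :=
      h1.isPreconnected.image P.f ((f_contOn P i).mono Set.inter_subset_right)
    exact h2.closure.ordConnected

lemma atom_ordConn (w : List (Fin P.N)) : OrdConnected (P.atomOf w) :=
  atomOf_eq P w ▸ foldl_pstep_ordConn P Set.ordConnected_Icc w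

/-! ### Words -/

lemma word_length (θ : ℕ → Fin P.N) (t n : ℕ) : (P.word θ t n).length = n := by
  simp [PCIM.word]

lemma word_concat (θ : ℕ → Fin P.N) (t n : ℕ) :
    P.word θ t (n+1) = P.word θ t n ++ [θ (t+n)] := by
  simp [PCIM.word, List.range_succ]

lemma word_eq_iff (θ : ℕ → Fin P.N) (t s n : ℕ) :
    P.word θ t n = P.word θ s n ↔ ∀ k < n, θ (t+k) = θ (s+k) := by
  induction n with
  | zero => simp [PCIM.word]
  | succ n ih =>
    rw [word_concat, word_concat]
    constructor
    · intro h
      have hl : (P.word θ t n).length = (P.word θ s n).length := by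
        rw [word_length, word_length]
      obtain ⟨h1, h2⟩ := List.append_inj h hl
      have h3 := (ih).mp h1
      intro k hk
      rcases Nat.lt_succ_iff_lt_or_eq.mp hk with hk | rfl
      · exact h3 k hk
      · exact List.singleton_injective h2
    · intro h
      have h1 : P.word θ t n = P.word θ s n := ih.mpr (fun k hk => h k (Nat.lt_succ_of_lt hk))
      rw [h1, h n (Nat.lt_succ_self n)]

lemma word_succ_inj (θ : ℕ → Fin P.N) {t s n : ℕ}
    (h : P.word θ t (n+1) = P.word θ s (n+1)) :
    P.word θ t n = P.word θ s n ∧ θ (t+n) = θ (s+n) := by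
  have h' := (word_eq_iff P θ t s (n+1)).mp h
  exact ⟨(word_eq_iff P θ t s n).mpr (fun k hk => h' k (Nat.lt_succ_of_lt hk)),
    h' n (Nat.lt_succ_self n)⟩

lemma orbit_mem_atom {x : ℝ} {θ : ℕ → Fin P.N} (hθ : P.IsItinerary x θ) (n t : ℕ) :
    P.f^[t + n] x ∈ P.atomOf (P.word θ t n) := by
  induction n with
  | zero =>
    have : P.word θ t 0 = [] := by simp [PCIM.word]
    rw [this]
    exact piece_subset P _ (hθ t)
  | succ n ih =>
    rw [word_concat, atomOf_concat]
    have h1 : P.f^[t+n] x ∈ P.atomOf (P.word θ t n) ∩ P.piece (θ (t+n)) := ⟨ih, hθ (t+n)⟩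
    have h2 : P.f (P.f^[t+n] x) ∈ P.f '' (P.atomOf (P.word θ t n) ∩ P.piece (θ (t+n))) :=
      Set.mem_image_of_mem _ h1
    have h3 : t + (n+1) = (t+n) + 1 := by omega
    rw [h3, Function.iterate_succ_apply']
    exact subset_closure h2

/-! ### Disjointness of atoms -/

lemma no_common_limit {i : Fin P.N}
    (hmono : StrictMonoOn P.f (P.piece i) ∨ StrictAntiOn P.f (P.piece i))
    {s t : ℕ → ℝ} (hs : ∀ k, s k ∈ P.piece i) (ht : ∀ k, t k ∈ P.piece i)
    {sh th L : ℝ}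
    (hsh : Tendsto s atTop (𝓝 sh)) (hth : Tendsto t atTop (𝓝 th))
    (hfs : Tendsto (fun k => P.f (s k)) atTop (𝓝 L))
    (hft : Tendsto (fun k => P.f (t k)) atTop (𝓝 L))
    (hlt : sh < th) : False := by
  set m1 := sh + (th - sh)/3 with hm1
  set m2 := sh + 2*(th - sh)/3 with hm2
  have h12 : m1 < m2 := by simp only [hm1, hm2]; linarith
  have hsm1 : sh < m1 := by simp only [hm1]; linarith
  have hm2t : m2 < th := by simp only [hm2]; linarith
  have hev1 : ∀ᶠ k in atTop, s k < m1 := hsh.eventually_lt_const hsm1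
  have hev2 : ∀ᶠ k in atTop, m2 < t k := hth.eventually_const_lt hm2t
  obtain ⟨k₀, hk₀⟩ := hev1.exists
  obtain ⟨l₀, hl₀⟩ := hev2.exists
  have hm1mem : m1 ∈ P.piece i :=
    (piece_ordConn P i).out (hs k₀) (ht l₀) ⟨hk₀.le, by linarith⟩
  have hm2mem : m2 ∈ P.piece i :=
    (piece_ordConn P i).out (hs k₀) (ht l₀) ⟨by linarith, hl₀.le⟩
  rcases hmono with hm | hm
  · have e1 : L ≤ P.f m1 := by
      apply le_of_tendsto hfs
      filter_upwards [hev1] with k hk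
      exact (hm (hs k) hm1mem hk).le
    have e2 : P.f m1 < P.f m2 := hm hm1mem hm2mem h12
    have e3 : P.f m2 ≤ L := by
      apply ge_of_tendsto hft
      filter_upwards [hev2] with k hk
      exact (hm hm2mem (ht k) hk).le
    linarith
  · have e1 : P.f m1 ≤ L := by
      apply ge_of_tendsto hfs
      filter_upwards [hev1] with k hk
      exact (hm (hs k) hm1mem hk).le
    have e2 : P.f m2 < P.f m1 := hm hm1mem hm2mem h12
    have e3 : L ≤ P.f m2 := by
      apply le_of_tendsto hft
      filter_upwards [hev2] with k hk
      exact (hm hm2mem (ht k) hk).le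
    linarith

lemma closure_mem_seq {S : Set ℝ} {L : ℝ} (hS : S ⊆ P.X) (hL : L ∈ closure (P.f '' S)) :
    ∃ (s : ℕ → ℝ) (sh : ℝ) (φ : ℕ → ℕ), (∀ k, s k ∈ S) ∧ StrictMono φ ∧
      Tendsto (s ∘ φ) atTop (𝓝 sh) ∧ Tendsto (fun k => P.f (s (φ k))) atTop (𝓝 L) := by
  obtain ⟨u, hu, hulim⟩ := mem_closure_iff_seq_limit.mp hL
  have hch : ∀ k, ∃ z, z ∈ S ∧ P.f z = u k := fun k => by
    obtain ⟨z, hz, hfz⟩ := hu k; exact ⟨z, hz, hfz⟩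
  choose s hsS hsf using hch
  have hbd : ∀ k, s k ∈ Set.Icc P.a P.b := fun k => hS (hsS k)
  obtain ⟨sh, _, φ, hφ, hlim⟩ := isCompact_Icc.tendsto_subseq hbd
  refine ⟨s, sh, φ, hsS, hφ, hlim, ?_⟩
  have : (fun k => P.f (s (φ k))) = u ∘ φ := by
    funext k; exact hsf (φ k)
  rw [this]
  exact hulim.comp hφ.tendsto_atTop

lemma pstep_disjoint_same (hsep : P.SeparationProperty) (i : Fin P.N) {A B : Set ℝ}
    (hA : IsClosed A) (hB : IsClosed B) (hAB : Disjoint A B)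
    (hAX : A ⊆ P.X) (hBX : B ⊆ P.X) :
    Disjoint (pstep P A i) (pstep P B i) := by
  rw [Set.disjoint_left]
  intro L hLA hLB
  obtain ⟨s, sh, φ, hsS, hφ, hslim, hfslim⟩ :=
    closure_mem_seq P (Set.inter_subset_left.trans hAX) hLA
  obtain ⟨t, th, ψ, htS, hψ, htlim, hftlim⟩ :=
    closure_mem_seq P (Set.inter_subset_left.trans hBX) hLB
  have hshA : sh ∈ A := hA.mem_of_tendsto hslim (Filter.Eventually.of_forall fun k => (hsS (φ k)).1)
  have hthB : th ∈ B := hB.mem_of_tendsto htlim (Filter.Eventually.of_forall fun k => (htS (ψ k)).1)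
  have hne : sh ≠ th := fun h => Set.disjoint_left.mp hAB hshA (h ▸ hthB)
  rcases hne.lt_or_gt with h | h
  · exact no_common_limit P (hsep.1 i) (fun k => (hsS (φ k)).2) (fun k => (htS (ψ k)).2)
      hslim htlim hfslim hftlim h
  · exact no_common_limit P (hsep.1 i) (fun k => (htS (ψ k)).2) (fun k => (hsS (φ k)).2)
      htlim hslim hftlim hfslim h

lemma pstep_disjoint_ne (hsep : P.SeparationProperty) {i j : Fin P.N} (hij : i ≠ j)
    (A B : Set ℝ) : Disjoint (pstep P A i) (pstep P B j) := by
  have h1 : pstep P A i ⊆ closure (P.f '' P.piece i) :=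
    closure_mono (Set.image_mono Set.inter_subset_right)
  have h2 : pstep P B j ⊆ closure (P.f '' P.piece j) :=
    closure_mono (Set.image_mono Set.inter_subset_right)
  have h3 : Disjoint (closure (P.f '' P.piece i)) (closure (P.f '' P.piece j)) :=
    Set.disjoint_iff_inter_eq_empty.mpr (hsep.2 i j hij)
  exact h3.mono h1 h2

lemma atom_disjoint (hsep : P.SeparationProperty) :
    ∀ (n : ℕ) (w w' : List (Fin P.N)), w.length = n → w'.length = n → w ≠ w' →
      Disjoint (P.atomOf w) (P.atomOf w') := by
  intro n
  induction n with
  | zero =>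
    intro w w' hw hw' hne
    exact absurd ((List.length_eq_zero_iff.mp hw).trans (List.length_eq_zero_iff.mp hw').symm) hne
  | succ n ih =>
    intro w w' hw hw' hne
    rcases List.eq_nil_or_concat w with rfl | ⟨u, i, rfl⟩
    · simp at hw
    rcases List.eq_nil_or_concat w' with rfl | ⟨u', i', rfl⟩
    · simp at hw'
    simp only [List.concat_eq_append] at *
    have hu : u.length = n := by simpa using hw
    have hu' : u'.length = n := by simpa using hw'
    rw [atomOf_concat, atomOf_concat]
    by_cases hii : i = i'
    · subst hii
      have huu : u ≠ u' := by rintro rfl; exact hne rfl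
      rcases Nat.eq_zero_or_pos n with rfl | hn
      · exact absurd ((List.length_eq_zero_iff.mp hu).trans (List.length_eq_zero_iff.mp hu').symm) huu
      · have hune : u ≠ [] := List.ne_nil_of_length_pos (hu ▸ hn)
        have hu'ne : u' ≠ [] := List.ne_nil_of_length_pos (hu' ▸ hn)
        exact pstep_disjoint_same P hsep i (atom_closed P hune) (atom_closed P hu'ne)
          (ih u u' hu hu' huu) (atom_subset_X P u) (atom_subset_X P u')
    · exact pstep_disjoint_ne P hsep hii _ _

/-! ### Language and counting -/

variable (θ : ℕ → Fin P.N)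

lemma lang_finite (n : ℕ) : (P.lang θ n).Finite := by
  apply (List.finite_length_eq (Fin P.N) n).subset
  rintro w ⟨t, rfl⟩
  exact word_length P θ t n

lemma complexity_zero : P.complexity θ 0 = 1 := by
  have h : P.lang θ 0 = {([] : List (Fin P.N))} := by
    ext w
    constructor
    · rintro ⟨t, rfl⟩; simp [PCIM.word, PCIM.lang]
    · rintro rfl; exact ⟨0, by simp [PCIM.word]⟩
  rw [PCIM.complexity, h, Set.ncard_singleton]

/-- the set of separation points at level `n` -/
def Cset (n : ℕ) : Set ℝ :=
  {z | ∃ t s : ℕ, P.word θ t n = P.word θ s n ∧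
    rs P (θ (t+n)) < rs P (θ (s+n)) ∧ z = rs P (θ (t+n))}

lemma Cset_finite (n : ℕ) : (Cset P θ n).Finite := by
  apply (Set.finite_range (rs P)).subset
  rintro z ⟨t, s, _, _, rfl⟩
  exact ⟨_, rfl⟩

lemma Cset_antitone (n : ℕ) : Cset P θ (n+1) ⊆ Cset P θ n := by
  rintro z ⟨t, s, hw, hlt, rfl⟩
  have hw' := (word_eq_iff P θ t s (n+1)).mp hw
  refine ⟨t+1, s+1, ?_, ?_, ?_⟩
  · apply (word_eq_iff P θ (t+1) (s+1) n).mpr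
    intro k hk
    have h := hw' (k+1) (by omega)
    rw [show t + (k+1) = t+1+k from by omega, show s+(k+1) = s+1+k from by omega] at h
    exact h
  · rw [show t+1+n = t+(n+1) from by omega, show s+1+n = s+(n+1) from by omega]
    exact hlt
  · rw [show t+1+n = t+(n+1) from by omega]

/-- words whose last letter is extension-maximal -/
def Amax (n : ℕ) : Set (List (Fin P.N)) :=
  {w | ∃ t, w = P.word θ t (n+1) ∧
    ∀ s, P.word θ s n = P.word θ t n → rs P (θ (s+n)) ≤ rs P (θ (t+n))}

/-- words whose last letter is not extension-maximal -/
def Aoth (n : ℕ) : Set (List (Fin P.N)) :=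
  {w | ∃ t, w = P.word θ t (n+1) ∧
    ∃ s, P.word θ s n = P.word θ t n ∧ rs P (θ (t+n)) < rs P (θ (s+n))}

lemma lang_eq_union (n : ℕ) : P.lang θ (n+1) = Amax P θ n ∪ Aoth P θ n := by
  ext w
  constructor
  · rintro ⟨t, rfl⟩
    by_cases h : ∀ s, P.word θ s n = P.word θ t n → rs P (θ (s+n)) ≤ rs P (θ (t+n))
    · exact Or.inl ⟨t, rfl, h⟩
    · push_neg at h
      obtain ⟨s, hs, hlt⟩ := h
      exact Or.inr ⟨t, rfl, s, hs, hlt⟩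
  · rintro (⟨t, rfl, _⟩ | ⟨t, rfl, _⟩) <;> exact ⟨t, rfl⟩

lemma Amax_Aoth_disjoint (n : ℕ) : Disjoint (Amax P θ n) (Aoth P θ n) := by
  rw [Set.disjoint_left]
  rintro w ⟨t, rfl, hmax⟩ ⟨t', hw', s, hs, hlt⟩
  obtain ⟨h1, h2⟩ := word_succ_inj P θ hw'
  have h3 := hmax s (hs.trans h1.symm)
  rw [h2] at h3
  exact absurd hlt (not_lt.mpr h3)

lemma take_bij (n : ℕ) :
    Set.BijOn (fun w : List (Fin P.N) => List.take n w) (Amax P θ n) (P.lang θ n) := by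
  refine ⟨?_, ?_, ?_⟩
  · rintro w ⟨t, rfl, _⟩
    refine ⟨t, ?_⟩
    show List.take n (P.word θ t (n+1)) = P.word θ t n
    rw [word_concat]
    exact List.take_left' (word_length P θ t n)
  · rintro w ⟨t, rfl, hmax⟩ w' ⟨t', rfl, hmax'⟩ h
    simp only [word_concat, List.take_left' (word_length P θ _ n)] at h
    have e1 := hmax t' h.symm
    have e2 := hmax' t h
    have e3 : θ (t+n) = θ (t'+n) := rs_inj P (le_antisymm e2 e1)
    rw [word_concat, word_concat, h, e3]
  · rintro u ⟨t₀, rfl⟩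
    have hfin : ({v : Fin P.N | ∃ s, P.word θ s n = P.word θ t₀ n ∧ θ (s+n) = v}).Finite :=
      Set.toFinite _
    have hne : ({v : Fin P.N | ∃ s, P.word θ s n = P.word θ t₀ n ∧ θ (s+n) = v}).Nonempty :=
      ⟨θ (t₀+n), t₀, rfl, rfl⟩
    obtain ⟨v, ⟨t, htw, htv⟩, hmax⟩ := Set.exists_max_image _ (rs P) hfin hne
    refine ⟨P.word θ t (n+1), ⟨t, rfl, ?_⟩, ?_⟩
    · intro s hs
      have h := hmax (θ (s+n)) ⟨s, hs.trans htw, rfl⟩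
      rwa [← htv] at h
    · show List.take n (P.word θ t (n+1)) = P.word θ t₀ n
      rw [word_concat, List.take_left' (word_length P θ t n)]
      exact htw

lemma g_bij (hsep : P.SeparationProperty) {x : ℝ} (hθ : P.IsItinerary x θ) (n : ℕ) :
    Set.BijOn (fun w : List (Fin P.N) => rs P (w.getLastD ⟨0, P.hN⟩))
      (Aoth P θ n) (Cset P θ n) := by
  have glast : ∀ t, (P.word θ t (n+1)).getLastD ⟨0, P.hN⟩ = θ (t+n) := by
    intro t; rw [word_concat]; exact List.getLastD_concat
  have hmem : ∀ (t s : ℕ), P.word θ s n = P.word θ t n →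
      rs P (θ (t+n)) < rs P (θ (s+n)) →
      rs P (θ (t+n)) ∈ P.atomOf (P.word θ t n) := by
    intro t s hw hlt
    have hp : P.f^[t+n] x ∈ P.atomOf (P.word θ t n) := orbit_mem_atom P hθ n t
    have hpp : P.f^[t+n] x ∈ P.piece (θ (t+n)) := hθ (t+n)
    have hq : P.f^[s+n] x ∈ P.atomOf (P.word θ t n) := hw ▸ orbit_mem_atom P hθ n s
    have hqq : P.f^[s+n] x ∈ P.piece (θ (s+n)) := hθ (s+n)
    have hLft : Left P (θ (t+n)) (θ (s+n)) := left_of_rs_lt P hlt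
    exact (atom_ordConn P _).out hp hq ⟨le_rs P hpp, rs_le P hLft hqq⟩
  refine ⟨?_, ?_, ?_⟩
  · rintro w ⟨t, rfl, s, hs, hlt⟩
    refine ⟨t, s, hs.symm, hlt, ?_⟩
    simp only [glast]
  · rintro w ⟨t, rfl, s, hs, hlt⟩ w' ⟨t', rfl, s', hs', hlt'⟩ h
    simp only [glast] at h
    have hi : θ (t+n) = θ (t'+n) := rs_inj P h
    by_cases huu : P.word θ t n = P.word θ t' n
    · rw [word_concat, word_concat, huu, hi]
    · exfalso
      have hdisj := atom_disjoint P hsep n _ _ (word_length P θ t n) (word_length P θ t' n) huu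
      have h1 := hmem t s hs hlt
      have h2 := hmem t' s' hs' hlt'
      rw [← hi] at h2
      exact Set.disjoint_left.mp hdisj h1 h2
  · rintro z ⟨t, s, hw, hlt, rfl⟩
    refine ⟨P.word θ t (n+1), ⟨t, rfl, s, hw.symm, hlt⟩, ?_⟩
    simp only [glast]

lemma complexity_succ (hsep : P.SeparationProperty) {x : ℝ} (hθ : P.IsItinerary x θ) (n : ℕ) :
    P.complexity θ (n+1) = P.complexity θ n + (Cset P θ n).ncard := by
  have hfin : (P.lang θ (n+1)).Finite := lang_finite P θ (n+1)
  have hmaxfin : (Amax P θ n).Finite :=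
    hfin.subset (by rw [lang_eq_union]; exact Set.subset_union_left)
  have hothfin : (Aoth P θ n).Finite :=
    hfin.subset (by rw [lang_eq_union]; exact Set.subset_union_right)
  rw [PCIM.complexity, PCIM.complexity, lang_eq_union P θ n,
    Set.ncard_union_eq (Amax_Aoth_disjoint P θ n) hmaxfin hothfin]
  congr 1
  · rw [← (take_bij P θ n).image_eq, Set.ncard_image_of_injOn (take_bij P θ n).injOn]
  · rw [← (g_bij P θ hsep hθ n).image_eq, Set.ncard_image_of_injOn (g_bij P θ hsep hθ n).injOn]

lemma Cset_card_le (n : ℕ) : (Cset P θ n).ncard ≤ P.N - 1 := by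
  obtain ⟨imax, -, hmax⟩ := Set.exists_max_image (Set.univ : Set (Fin P.N)) (rs P)
    Set.finite_univ ⟨⟨0, P.hN⟩, trivial⟩
  have hsub : Cset P θ n ⊆ rs P '' (Set.univ \ {imax}) := by
    rintro z ⟨t, s, -, hlt, rfl⟩
    refine ⟨θ (t+n), ⟨trivial, ?_⟩, rfl⟩
    intro h
    rw [Set.mem_singleton_iff] at h
    have h2 := hmax (θ (s+n)) trivial
    rw [← h] at h2
    exact absurd hlt (not_lt.mpr h2)
  have hfin : ((Set.univ : Set (Fin P.N)) \ {imax}).Finite := Set.toFinite _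
  calc (Cset P θ n).ncard ≤ (rs P '' (Set.univ \ {imax})).ncard :=
        Set.ncard_le_ncard hsub (hfin.image _)
    _ = ((Set.univ : Set (Fin P.N)) \ {imax}).ncard :=
        Set.ncard_image_of_injOn (fun i _ j _ h => rs_inj P h)
    _ = P.N - 1 := by
        rw [Set.ncard_diff_singleton_of_mem (Set.mem_univ imax), Set.ncard_univ]
        simp

end PCIMAux

/-- Catsigeras–Guiraud–Meyroneinc: under the separation property,
the complexity of the itinerary of any point of `X̃` is eventually affine:
`p_θ(n) = α n + β` for all `n ≥ m₀`, with `α ∈ {0,…,N-1}` and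
`β ∈ {1,…,1 + m₀ (N-1-α)}`. -/
theorem complexity_eventually_affine (P : PCIM)
    (hsep : P.SeparationProperty) (x : ℝ) (hx : x ∈ P.Xtilde)
    (θ : ℕ → Fin P.N) (hθ : P.IsItinerary x θ) :
    ∃ (m₀ α β : ℕ), 1 ≤ m₀ ∧ α ≤ P.N - 1 ∧
      1 ≤ β ∧ β ≤ 1 + m₀ * (P.N - 1 - α) ∧
      ∀ n ≥ m₀, P.complexity θ n = α * n + β := by
  classical
  set σ : ℕ → ℕ := fun n => (PCIMAux.Cset P θ n).ncard with hσ
  have hstep : ∀ n, σ (n+1) ≤ σ n := fun n =>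
    Set.ncard_le_ncard (PCIMAux.Cset_antitone P θ n) (PCIMAux.Cset_finite P θ n)
  have hanti : ∀ m n, m ≤ n → σ n ≤ σ m := fun m n h => antitone_nat_of_succ_le hstep h
  have hbound : ∀ n, σ n ≤ P.N - 1 := fun n => PCIMAux.Cset_card_le P θ n
  set α := sInf (Set.range σ) with hα
  obtain ⟨m, hm⟩ : α ∈ Set.range σ := Nat.sInf_mem ⟨σ 0, 0, rfl⟩
  have hαle : ∀ n, α ≤ σ n := fun n => Nat.sInf_le ⟨n, rfl⟩
  have hconst : ∀ n, m ≤ n → σ n = α := fun n h => le_antisymm (hm ▸ hanti m n h) (hαle n)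
  set m₀ := max m 1 with hm₀def
  have htel : ∀ n, P.complexity θ n = 1 + ∑ k ∈ Finset.range n, σ k := by
    intro n
    induction n with
    | zero => simpa using PCIMAux.complexity_zero P θ
    | succ n ih =>
      rw [PCIMAux.complexity_succ P θ hsep hθ n, ih, Finset.sum_range_succ]
      simp only [hσ]
      omega
  have hlow : 1 + α * m₀ ≤ P.complexity θ m₀ := by
    rw [htel m₀]
    have h1 : α * m₀ = ∑ _k ∈ Finset.range m₀, α := by
      rw [Finset.sum_const, Finset.card_range, smul_eq_mul, mul_comm]
    rw [h1]
    exact Nat.add_le_add_left (Finset.sum_le_sum fun k _ => hαle k) 1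
  have hhigh : P.complexity θ m₀ ≤ 1 + m₀ * (P.N - 1) := by
    rw [htel m₀]
    have h1 : m₀ * (P.N - 1) = ∑ _k ∈ Finset.range m₀, (P.N - 1) := by
      rw [Finset.sum_const, Finset.card_range, smul_eq_mul]
    rw [h1]
    exact Nat.add_le_add_left (Finset.sum_le_sum fun k _ => hbound k) 1
  have hαN : α ≤ P.N - 1 := le_trans (hαle m₀) (hbound m₀)
  refine ⟨m₀, α, P.complexity θ m₀ - α * m₀, le_max_right m 1, hαN, by omega, ?_, ?_⟩
  · have hx2 : m₀ * (P.N - 1 - α) + m₀ * α = m₀ * (P.N - 1) := by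
      rw [← Nat.mul_add, Nat.sub_add_cancel hαN]
    have hcm : α * m₀ = m₀ * α := mul_comm _ _
    omega
  · intro n hn
    induction n, hn using Nat.le_induction with
    | base => omega
    | succ n hn ih =>
      have hc := hconst n (le_trans (le_max_left m 1) hn)
      simp only [hσ] at hc
      rw [PCIMAux.complexity_succ P θ hsep hθ n, ih, hc]
      ring
end
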